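/- arXiv:1704.08554 — 6 statements merged into one kernel-verified Lean document; each statement's English description precedes it below -/
import Mathlib

section
/- A topological group G has the SSGP property if and only if G = ⋃_{k ∈ ℕ⁺} W · ⟨Cyc(W)⟩_k for every neighbourhood W of the identity of G, where ⟨A⟩_k denotes the set of products of at most k elements of A. -/
open Filter Pointwise

/-- `Cyc A` is the set of elements whose generated cyclic subgroup lies inside `A`. -/
def Cyc {G : Type*} [Group G] (A : Set G) : Set G :=
  {x : G | (Subgroup.zpowers x : Set G) ⊆ A}

/-- `prodBdd A k` is the set `⟨A⟩_k` of products of at most `k` elements of `A`. -/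
def prodBdd {G : Type*} [Group G] (A : Set G) (k : ℕ) : Set G :=
  {x : G | ∃ j ≤ k, ∃ f : Fin j → G, (∀ i, f i ∈ A) ∧ x = (List.ofFn f).prod}

/-- A topological group has the small subgroup generating property if
`⟨Cyc U⟩` is dense for every neighbourhood `U` of the identity. -/
def SSGP (G : Type*) [Group G] [TopologicalSpace G] : Prop :=
  ∀ U ∈ nhds (1 : G), Dense (Subgroup.closure (Cyc U) : Set G)

lemma Cyc_inv_mem {G : Type*} [Group G] {A : Set G} {x : G} (hx : x ∈ Cyc A) :
    x⁻¹ ∈ Cyc A := by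
  simpa [Cyc, Subgroup.zpowers_inv] using hx

lemma Cyc_mono {G : Type*} [Group G] {A B : Set G} (h : A ⊆ B) : Cyc A ⊆ Cyc B :=
  fun _ hx => hx.trans h

lemma mem_closure_of_list_prod {G : Type*} [Group G] {S : Set G} {x : G}
    (hx : x ∈ Subgroup.closure S) :
    ∃ l : List G, (∀ y ∈ l, y ∈ S ∪ S⁻¹) ∧ l.prod = x := by
  have h : x ∈ (Subgroup.closure S).toSubmonoid := hx
  rw [Subgroup.closure_toSubmonoid] at h
  exact Submonoid.exists_list_of_mem_closure h

/-- `G` is SSGP iff `G = ⋃_{k ∈ ℕ⁺} W ⋅ ⟨Cyc W⟩_k` for every neighbourhood `W`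
of the identity of `G`. -/
theorem stmt_3 (G : Type*) [Group G] [TopologicalSpace G] [IsTopologicalGroup G] :
    SSGP G ↔
      ∀ W ∈ nhds (1 : G),
        (⋃ (k : ℕ) (_ : 0 < k), W * prodBdd (Cyc W) k) = (Set.univ : Set G) := by
  constructor
  · intro hssgp W hW
    ext g
    simp only [Set.mem_univ, iff_true, Set.mem_iUnion]
    have hN : (fun x : G => g * x⁻¹) ⁻¹' W ∈ nhds g := by
      have hc : ContinuousAt (fun x : G => g * x⁻¹) g := by fun_prop
      apply hc.preimage_mem_nhds
      simpa using hW
    obtain ⟨h, hhN, hhH⟩ := mem_closure_iff_nhds.mp (hssgp W hW g) _ hN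
    obtain ⟨l, hl, hlprod⟩ := mem_closure_of_list_prod hhH
    have hl' : ∀ y ∈ l, y ∈ Cyc W := by
      intro y hy
      rcases hl y hy with h1 | h1
      · exact h1
      · simpa using Cyc_inv_mem h1
    refine ⟨l.length + 1, Nat.succ_pos _, g * h⁻¹, hhN, h, ?_, by group⟩
    refine ⟨l.length, Nat.le_succ _, l.get, fun i => hl' _ (l.get_mem _), ?_⟩
    rw [List.ofFn_get, hlprod]
  · intro hU U hUnhds
    rw [dense_iff_closure_eq, Set.eq_univ_iff_forall]
    intro g
    rw [mem_closure_iff_nhds]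
    intro N hN
    -- take W := U ∩ {x | x⁻¹ * g ∈ N}
    have hW : U ∩ ((fun x : G => x⁻¹ * g) ⁻¹' N) ∈ nhds (1 : G) := by
      refine Filter.inter_mem hUnhds ?_
      have hc : ContinuousAt (fun x : G => x⁻¹ * g) 1 := by fun_prop
      apply hc.preimage_mem_nhds
      simpa using hN
    have := hU _ hW
    have hg : g ∈ ⋃ (k : ℕ) (_ : 0 < k),
        (U ∩ ((fun x : G => x⁻¹ * g) ⁻¹' N)) * prodBdd (Cyc (U ∩ ((fun x : G => x⁻¹ * g) ⁻¹' N))) k := by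
      rw [this]; trivial
    simp only [Set.mem_iUnion] at hg
    obtain ⟨k, -, w, hw, p, hp, hwp⟩ := hg
    refine ⟨p, ?_, ?_⟩
    · -- p = w⁻¹ * g ∈ N
      have : p = w⁻¹ * g := by rw [← hwp]; group
      rw [this]
      exact hw.2
    · -- p ∈ closure (Cyc U)
      obtain ⟨j, -, f, hf, hfp⟩ := hp
      rw [hfp]
      exact list_prod_mem fun x hx => by
        obtain ⟨i, rfl⟩ := List.mem_ofFn.mp hx
        exact Subgroup.subset_closure (Cyc_mono Set.inter_subset_left (hf i))
end

section
/- Let s ∈ ℤ, k ∈ ℕ⁺, g₁,…,g_k ∈ ℚ^m, and let π₀ ⊆ π₁ ⊆ ⋯ ⊆ π_k be finite sets of primes such that for every j = 1,…,k: (a) g_j ∈ Q_{π_j}^m, and (b) ⟨g_j⟩ ∩ Q_{π_{j-1}}^m ⊆ (sℤ)^m. Then ⟨{g_i,…,g_k}⟩ ∩ Q_{π_{i-1}}^m ⊆ (sℤ)^m for every i = 1,…,k. -/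
open Pointwise

/-- Rationals whose reduced denominator has all prime divisors in the finite set `π`. -/
def QpiSet (π : Finset ℕ) : Set ℚ := {q : ℚ | ∀ p : ℕ, p.Prime → p ∣ q.den → p ∈ π}

/-- The subset `Q_π^m` of `ℚ^m`. -/
def QpiVec (m : ℕ) (π : Finset ℕ) : Set (Fin m → ℚ) := {v | ∀ i, v i ∈ QpiSet π}

/-- The subset `(sℤ)^m` of `ℚ^m`. -/
def intVec (m : ℕ) (s : ℤ) : Set (Fin m → ℚ) := {v | ∀ i, ∃ z : ℤ, v i = (s : ℚ) * z}

lemma qpi_int (π : Finset ℕ) (z : ℤ) : (z : ℚ) ∈ QpiSet π := by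
  intro p hp hd
  simp [Rat.den_intCast] at hd
  exact absurd hd hp.one_lt.ne'

lemma qpi_add {π : Finset ℕ} {a b : ℚ} (ha : a ∈ QpiSet π) (hb : b ∈ QpiSet π) :
    a + b ∈ QpiSet π := by
  intro p hp hd
  rcases (hp.dvd_mul.mp (hd.trans (Rat.add_den_dvd a b))) with h | h
  · exact ha p hp h
  · exact hb p hp h

lemma qpi_zsmul {π : Finset ℕ} {a : ℚ} (n : ℤ) (ha : a ∈ QpiSet π) :
    (n : ℚ) * a ∈ QpiSet π := by
  intro p hp hd
  rcases (hp.dvd_mul.mp (hd.trans (Rat.mul_den_dvd _ a))) with h | h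
  · simp [Rat.den_intCast] at h; exact absurd h hp.one_lt.ne'
  · exact ha p hp h

lemma qpi_sub {π : Finset ℕ} {a b : ℚ} (ha : a ∈ QpiSet π) (hb : b ∈ QpiSet π) :
    a - b ∈ QpiSet π := by
  have := qpi_add ha (qpi_zsmul (-1) hb)
  simpa [sub_eq_add_neg] using this

/-- Lemma 5.2(A)(ii): under conditions (a_j), (b_j),
`⟨{g_i,…,g_k}⟩ ∩ Q_{π_{i-1}}^m ⊆ (sℤ)^m` for every `i = 1,…,k`. -/
theorem stmt_6 (m : ℕ) (s : ℤ) (k : ℕ) (hk : 0 < k)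
    (g : ℕ → Fin m → ℚ) (π : ℕ → Finset ℕ)
    (hπ : ∀ j ≤ k, ∀ p ∈ π j, Nat.Prime p)
    (hmono : ∀ j < k, π j ⊆ π (j + 1))
    (ha : ∀ j, 1 ≤ j → j ≤ k → g j ∈ QpiVec m (π j))
    (hb : ∀ j, 1 ≤ j → j ≤ k →
      (AddSubgroup.zmultiples (g j) : Set (Fin m → ℚ)) ∩ QpiVec m (π (j - 1)) ⊆ intVec m s) :
    ∀ i, 1 ≤ i → i ≤ k →
      (AddSubgroup.closure {x : Fin m → ℚ | ∃ j, i ≤ j ∧ j ≤ k ∧ x = g j} :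
        Set (Fin m → ℚ)) ∩ QpiVec m (π (i - 1)) ⊆ intVec m s := by
  have key : ∀ d : ℕ, ∀ i, 1 ≤ i → i ≤ k → k - i ≤ d →
      (AddSubgroup.closure {x : Fin m → ℚ | ∃ j, i ≤ j ∧ j ≤ k ∧ x = g j} :
        Set (Fin m → ℚ)) ∩ QpiVec m (π (i - 1)) ⊆ intVec m s := by
    intro d
    induction d with
    | zero =>
      intro i hi1 hik hd
      have hik' : i = k := by omega
      subst hik'
      have hset : {x : Fin m → ℚ | ∃ j, i ≤ j ∧ j ≤ i ∧ x = g j} = {g i} := by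
        ext x
        constructor
        · rintro ⟨j, h1, h2, rfl⟩; have : j = i := le_antisymm h2 h1; simp [this]
        · rintro rfl; exact ⟨i, le_refl _, le_refl _, rfl⟩
      rw [hset]
      intro x hx
      exact hb i hi1 le_rfl ⟨by simpa [AddSubgroup.zmultiples_eq_closure] using hx.1, hx.2⟩
    | succ d ih =>
      intro i hi1 hik hd
      by_cases hcase : k - i ≤ d
      · exact ih i hi1 hik hcase
      have hlt : i < k := by omega
      -- split the generating set
      have hset : {x : Fin m → ℚ | ∃ j, i ≤ j ∧ j ≤ k ∧ x = g j} =
          insert (g i) {x : Fin m → ℚ | ∃ j, i + 1 ≤ j ∧ j ≤ k ∧ x = g j} := by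
        ext x
        constructor
        · rintro ⟨j, h1, h2, rfl⟩
          rcases eq_or_lt_of_le h1 with h | h
          · exact Or.inl (by rw [← h])
          · exact Or.inr ⟨j, h, h2, rfl⟩
        · rintro (rfl | ⟨j, h1, h2, rfl⟩)
          · exact ⟨i, le_rfl, hlt.le, rfl⟩
          · exact ⟨j, by omega, h2, rfl⟩
      intro x hx
      obtain ⟨hx1, hx2⟩ := hx
      rw [hset, ← Set.singleton_union, AddSubgroup.closure_union, ← AddSubgroup.zmultiples_eq_closure] at hx1
      obtain ⟨a, haa, b, hbb, rfl⟩ := AddSubgroup.mem_sup.mp hx1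
      obtain ⟨n, rfl⟩ := AddSubgroup.mem_zmultiples_iff.mp haa
      -- a = n • g i ∈ QpiVec (π i)
      have hgQ : g i ∈ QpiVec m (π i) := ha i hi1 hlt.le
      have haQ : (n • g i) ∈ QpiVec m (π i) := by
        intro idx
        have : (n • g i) idx = (n : ℚ) * g i idx := by
          simp [Pi.smul_apply, zsmul_eq_mul]
        rw [this]
        exact qpi_zsmul n (hgQ idx)
      -- x ∈ QpiVec (π i) since π (i-1) ⊆ π i
      have hsub : π (i - 1) ⊆ π i := by
        have := hmono (i - 1) (by omega)
        have h1 : i - 1 + 1 = i := by omega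
        rwa [h1] at this
      have hxQ : (n • g i + b) ∈ QpiVec m (π i) := fun idx p hp hd' =>
        hsub (hx2 idx p hp hd')
      -- b = x - a ∈ QpiVec (π i)
      have hbQ : b ∈ QpiVec m (π i) := by
        intro idx
        have : b idx = (n • g i + b) idx - (n • g i) idx := by simp
        rw [this]
        exact qpi_sub (hxQ idx) (haQ idx)
      -- apply IH to b
      have hbInt : b ∈ intVec m s := by
        refine ih (i + 1) (by omega) (by omega) (by omega) ⟨?_, ?_⟩
        · exact hbb
        · have h2 : i + 1 - 1 = i := by omega
          rw [h2]; exact hbQ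
      -- b ∈ QpiVec (π (i-1)) since its coords are integers
      have hbQ' : b ∈ QpiVec m (π (i - 1)) := by
        intro idx
        obtain ⟨z, hz⟩ := hbInt idx
        rw [hz]
        have : (s : ℚ) * z = ((s * z : ℤ) : ℚ) := by push_cast; ring
        rw [this]
        exact qpi_int _ _
      -- a ∈ QpiVec (π (i-1))
      have haQ' : (n • g i) ∈ QpiVec m (π (i - 1)) := by
        intro idx
        have : (n • g i) idx = (n • g i + b) idx - b idx := by simp
        rw [this]
        exact qpi_sub (hx2 idx) (hbQ' idx)
      have haInt : (n • g i) ∈ intVec m s :=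
        hb i hi1 hlt.le ⟨AddSubgroup.zsmul_mem_zmultiples (g i) n, haQ'⟩
      intro idx
      obtain ⟨z1, hz1⟩ := haInt idx
      obtain ⟨z2, hz2⟩ := hbInt idx
      refine ⟨z1 + z2, ?_⟩
      simp only [Pi.add_apply, hz1, hz2]
      push_cast; ring
  intro i hi1 hik
  exact key (k - i) i hi1 hik le_rfl
end

section
/- Let G be a wide subgroup of ℚ^m (i.e., ℤ^m ⊆ G and G is not contained in Q_π^m for any finite set π of primes). Then for every finite set π of primes, every k ∈ ℕ \ {0} and every s ∈ ℤ \ {0}, there exists g ∈ G such that (i) ⟨g⟩ ∩ Q_π^m ⊆ (sℤ)^m, and (ii) l·g ∉ Q_π^m for every nonzero integer l with |l| ≤ k. -/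
open Pointwise

/-- Denominator of an integer multiple divides the denominator. -/
lemma denA (n : ℤ) (q : ℚ) : ((n:ℚ) * q).den ∣ q.den := by
  have := Rat.mul_den_dvd (n:ℚ) q
  simpa using this

/-- The denominator divides `|n|` times the denominator of `n • q`. -/
lemma denB (n : ℤ) (hn : n ≠ 0) (q : ℚ) : q.den ∣ n.natAbs * ((n:ℚ) * q).den := by
  have h : q = ((n:ℚ))⁻¹ * ((n:ℚ) * q) := by
    field_simp
  calc q.den = (((n:ℚ))⁻¹ * ((n:ℚ)*q)).den := by rw [← h]
    _ ∣ ((n:ℚ))⁻¹.den * ((n:ℚ)*q).den := Rat.mul_den_dvd _ _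
    _ = n.natAbs * ((n:ℚ)*q).den := by rw [Rat.inv_intCast_den, if_neg hn]

/-- Multiplying by the `p`-free part of the denominator leaves only a power of `p`. -/
lemma denC (p : ℕ) (hp : p.Prime) (q : ℚ) :
    (((q.den / p ^ q.den.factorization p : ℕ):ℚ) * q).den ∣ p ^ (q.den.factorization p) := by
  set b := q.den.factorization p with hb
  set D : ℕ := q.den / p ^ b with hD
  have hd : (p:ℚ)^b * (D:ℚ) = (q.den:ℚ) := by
    exact_mod_cast congrArg (Nat.cast : ℕ → ℚ) (Nat.ordProj_mul_ordCompl_eq_self q.den p)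
  have hp0 : (p:ℚ) ≠ 0 := Nat.cast_ne_zero.mpr hp.ne_zero
  have key : (D:ℚ) * q = (q.num : ℚ) / (p:ℚ)^b := by
    rw [eq_div_iff (pow_ne_zero _ hp0), mul_right_comm, mul_comm (D:ℚ), hd, mul_comm]
    exact Rat.mul_den_eq_num q
  have := Rat.den_dvd q.num ((p:ℤ)^b)
  rw [Rat.divInt_eq_div] at this
  have h2 : ((D:ℚ) * q).den = ((q.num : ℚ) / ((p:ℤ)^b : ℤ)).den := by
    rw [key]; push_cast; ring_nf
  rw [← h2] at this
  exact_mod_cast this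

/-- Lemma 6.2: if `G` is a wide subgroup of `ℚ^m`, then for every finite set `π` of
primes, `k ∈ ℕ \ {0}` and `s ∈ ℤ \ {0}` there is `g ∈ G` with
`⟨g⟩ ∩ Q_π^m ⊆ (sℤ)^m` and `l·g ∉ Q_π^m` for all nonzero integers `l` with `|l| ≤ k`. -/
theorem stmt_8 (m : ℕ) (hm : 0 < m) (G : AddSubgroup (Fin m → ℚ))
    (hZ : ∀ v : Fin m → ℚ, (∀ i, ∃ z : ℤ, v i = (z : ℚ)) → v ∈ G)
    (hwide : ∀ π : Finset ℕ, (∀ p ∈ π, Nat.Prime p) → ∃ x ∈ G, x ∉ QpiVec m π)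
    (π : Finset ℕ) (hπ : ∀ p ∈ π, Nat.Prime p)
    (k : ℕ) (hk : k ≠ 0) (s : ℤ) (hs : s ≠ 0) :
    ∃ g ∈ G,
      ((AddSubgroup.zmultiples g : Set (Fin m → ℚ)) ∩ QpiVec m π ⊆ intVec m s) ∧
      ∀ l : ℤ, l ≠ 0 → |l| ≤ (k : ℤ) → l • g ∉ QpiVec m π := by
  classical
  set π' : Finset ℕ := π ∪ ((Finset.range (k+1)).filter Nat.Prime) ∪ s.natAbs.primeFactors
    with hπ'def
  have hπ'p : ∀ p ∈ π', Nat.Prime p := by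
    intro p hp
    simp only [hπ'def, Finset.mem_union, Finset.mem_filter] at hp
    rcases hp with (hp | hp) | hp
    · exact hπ p hp
    · exact hp.2
    · exact Nat.prime_of_mem_primeFactors hp
  obtain ⟨x, hxG, hx⟩ := hwide π' hπ'p
  simp only [QpiVec, Set.mem_setOf_eq, not_forall] at hx
  obtain ⟨i, hxi⟩ := hx
  simp only [QpiSet, Set.mem_setOf_eq, not_forall] at hxi
  obtain ⟨p, hp, hpden, hpπ'⟩ := hxi
  have hpπ : p ∉ π := fun h => hpπ' (by simp [hπ'def, h])
  have hpk : (k:ℤ) < (p:ℤ) := by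
    by_contra h
    push_neg at h
    refine hpπ' ?_
    simp only [hπ'def, Finset.mem_union, Finset.mem_filter, Finset.mem_range]
    left; right
    exact ⟨by omega, hp⟩
  have hps : ¬ ((p:ℤ) ∣ s) := by
    intro h
    refine hpπ' ?_
    simp only [hπ'def, Finset.mem_union, Nat.mem_primeFactors]
    right
    exact ⟨hp, Int.natAbs_dvd_natAbs.mpr (by simpa using h), by simpa using hs⟩
  have hpsN : ¬ (p ∣ s.natAbs) := fun h =>
    hps (Int.dvd_natAbs.mp (Int.natCast_dvd_natCast.mpr h))
  -- the p-free parts of the denominators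
  set D : ℕ := ∏ j : Fin m, ((x j).den / p ^ ((x j).den.factorization p)) with hDdef
  have hD0 : D ≠ 0 := by
    apply Finset.prod_ne_zero_iff.mpr
    intro j _
    exact (Nat.ordCompl_pos p (x j).den_nz).ne'
  have hpD : ¬ (p ∣ D) := by
    intro h
    obtain ⟨j, _, hj⟩ := (Nat.Prime.prime hp).exists_mem_finset_dvd h
    exact Nat.not_dvd_ordCompl hp (x j).den_nz hj
  -- den of D * (x j) is a power of p
  have hDden : ∀ j : Fin m, ((D:ℚ) * x j).den ∣ p ^ ((x j).den.factorization p) := by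
    intro j
    set E : ℕ := ∏ t ∈ (Finset.univ : Finset (Fin m)).erase j,
      ((x t).den / p ^ ((x t).den.factorization p)) with hEdef
    have hDE : D = ((x j).den / p ^ ((x j).den.factorization p)) * E := by
      rw [hDdef, hEdef, ← Finset.prod_erase_mul _ _ (Finset.mem_univ j)]
      ring
    have hcast : (D:ℚ)
        = ((((x j).den / p ^ ((x j).den.factorization p) : ℕ)):ℚ) * (E:ℚ) := by
      exact_mod_cast congrArg (Nat.cast : ℕ → ℚ) hDE
    have h2 : (D:ℚ) * x j
        = ((E:ℤ):ℚ) * ((((x j).den / p ^ ((x j).den.factorization p) : ℕ):ℚ) * x j) := by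
      rw [hcast]; push_cast; ring
    rw [h2]
    exact dvd_trans (denA (E:ℤ) _) (denC p hp (x j))
  have hsD0 : s * (D:ℤ) ≠ 0 := mul_ne_zero hs (by exact_mod_cast hD0)
  refine ⟨(s * (D:ℤ)) • x, AddSubgroup.zsmul_mem G hxG _, ?_, ?_⟩
  · -- condition (i)
    rintro v ⟨hv1, hv2⟩
    obtain ⟨n, rfl⟩ := AddSubgroup.mem_zmultiples_iff.mp hv1
    intro j
    have hvj : (n • (s * (D:ℤ)) • x) j = (s:ℚ) * (((n * D : ℤ):ℚ) * x j) := by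
      rw [show (n • (s * (D:ℤ)) • x) j = n • ((s * (D:ℤ)) • x j) from rfl,
        zsmul_eq_mul, zsmul_eq_mul]
      push_cast
      ring
    set u : ℚ := ((n * D : ℤ):ℚ) * x j with hu
    have hub : u.den ∣ p ^ ((x j).den.factorization p) := by
      have : u = (n:ℚ) * ((D:ℚ) * x j) := by rw [hu]; push_cast; ring
      rw [this]
      exact dvd_trans (denA n _) (hDden j)
    -- v j has denominator 1
    have hvden : ((s:ℚ) * u).den = 1 := by
      by_contra hne
      obtain ⟨r, hr, hrd⟩ := Nat.exists_prime_and_dvd hne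
      have hrp : r = p := by
        have : r ∣ p ^ ((x j).den.factorization p) :=
          dvd_trans hrd (dvd_trans (denA s u) hub)
        exact (Nat.prime_dvd_prime_iff_eq hr hp).mp (hr.dvd_of_dvd_pow this)
      have hv2j : (s:ℚ) * u ∈ QpiSet π := hvj ▸ hv2 j
      exact hpπ (hv2j p hp (hrp ▸ hrd))
    -- u has denominator 1
    have huden : u.den = 1 := by
      by_contra hne
      obtain ⟨r, hr, hrd⟩ := Nat.exists_prime_and_dvd hne
      have hrp : r = p := by
        have : r ∣ p ^ ((x j).den.factorization p) := dvd_trans hrd hub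
        exact (Nat.prime_dvd_prime_iff_eq hr hp).mp (hr.dvd_of_dvd_pow this)
      subst hrp
      have : u.den ∣ s.natAbs * ((s:ℚ) * u).den := denB s hs u
      rw [hvden, mul_one] at this
      exact hpsN (dvd_trans hrd this)
    refine ⟨u.num, ?_⟩
    rw [hvj, (Rat.den_eq_one_iff u).mp huden]
  · -- condition (ii)
    intro l hl hlk hmem
    have hi := hmem i
    have hcoord : (l • (s * (D:ℤ)) • x) i = ((l * (s * D) : ℤ):ℚ) * x i := by
      rw [show (l • (s * (D:ℤ)) • x) i = l • ((s * (D:ℤ)) • x i) from rfl,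
        zsmul_eq_mul, zsmul_eq_mul]
      push_cast
      ring
    rw [hcoord] at hi
    have hn0 : l * (s * (D:ℤ)) ≠ 0 := mul_ne_zero hl hsD0
    have hdvd : (x i).den ∣ (l * (s * (D:ℤ))).natAbs * (((l * (s * D) : ℤ):ℚ) * x i).den :=
      denB _ hn0 (x i)
    have hpl : ¬ ((p:ℤ) ∣ l) := by
      intro h
      have := Int.le_of_dvd (abs_pos.mpr hl) ((dvd_abs _ _).mpr h)
      linarith
    have hpn : ¬ (p ∣ (l * (s * (D:ℤ))).natAbs) := by
      rw [Int.natAbs_mul, Int.natAbs_mul]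
      intro h
      rcases (Nat.Prime.dvd_mul hp).mp h with h | h
      · exact hpl (Int.dvd_natAbs.mp (Int.natCast_dvd_natCast.mpr h))
      · rcases (Nat.Prime.dvd_mul hp).mp h with h | h
        · exact hpsN h
        · exact hpD (by simpa using h)
    have hpd : p ∣ (((l * (s * D) : ℤ):ℚ) * x i).den := by
      rcases (Nat.Prime.dvd_mul hp).mp (dvd_trans hpden hdvd) with h | h
      · exact absurd h hpn
      · exact h
    exact hpπ (hi p hp hpd)
end

section
/- Let G be a wide subgroup of ℚ^m, π₀ a finite set of primes, k ∈ ℕ⁺ and s ∈ ℤ \ {0}. Then there exist an increasing chain π₀ ⊆ π₁ ⊆ ⋯ ⊆ π_k of finite sets of primes and elements g₁,…,g_k ∈ G such that for every j = 1,…,k: g_j ∈ Q_{π_j}^m, ⟨g_j⟩ ∩ Q_{π_{j-1}}^m ⊆ (sℤ)^m, and n·g_j ∉ Q_{π_{j-1}}^m for every nonzero integer n with |n| ≤ k. -/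
open Pointwise

lemma den_div_int_dvd (z w : ℤ) : (((z:ℚ)/(w:ℚ)).den : ℤ) ∣ w := by
  rw [← Rat.divInt_eq_div]; exact Rat.den_dvd z w

lemma prime_dvd_den_int_mul {p : ℕ} (hp : p.Prime) {c : ℤ} (hc : ¬ (p:ℤ) ∣ c)
    {q : ℚ} (h : p ∣ q.den) : p ∣ ((c:ℚ) * q).den := by
  have hc0 : (c:ℚ) ≠ 0 := by
    intro h0
    exact hc (by simp [show c = 0 by exact_mod_cast h0])
  have hq : q = (c:ℚ)⁻¹ * ((c:ℚ) * q) := by field_simp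
  have hdvd : q.den ∣ ((c:ℚ)⁻¹).den * ((c:ℚ) * q).den := by
    conv_lhs => rw [hq]
    exact Rat.mul_den_dvd _ _
  have h2 : p ∣ ((c:ℚ)⁻¹).den * ((c:ℚ) * q).den := h.trans hdvd
  rcases (Nat.Prime.dvd_mul hp).1 h2 with h3 | h3
  · exfalso
    apply hc
    have : (((c:ℚ)⁻¹).den : ℤ) ∣ c := by
      have : (c:ℚ)⁻¹ = ((1:ℤ):ℚ) / ((c:ℤ):ℚ) := by push_cast; ring
      rw [this]; exact den_div_int_dvd 1 c
    exact dvd_trans (by exact_mod_cast h3) this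
  · exact h3

lemma den_one_cast (w : ℚ) (h : w.den = 1) : w = (w.num : ℚ) := by
  conv_lhs => rw [← Rat.num_div_den w, h]
  simp

private lemma step_lemma (m : ℕ) (G : AddSubgroup (Fin m → ℚ))
    (hwide : ∀ π : Finset ℕ, (∀ p ∈ π, Nat.Prime p) → ∃ x ∈ G, x ∉ QpiVec m π)
    (k : ℕ) (s : ℤ) (hs : s ≠ 0)
    (π : Finset ℕ) (hπ : ∀ p ∈ π, Nat.Prime p) :
    ∃ (π' : Finset ℕ) (g : Fin m → ℚ),
      π ⊆ π' ∧ (∀ p ∈ π', Nat.Prime p) ∧ g ∈ G ∧ g ∈ QpiVec m π' ∧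
      ((AddSubgroup.zmultiples g : Set (Fin m → ℚ)) ∩ QpiVec m π ⊆ intVec m s) ∧
      (∀ n : ℤ, n ≠ 0 → |n| ≤ (k:ℤ) → n • g ∉ QpiVec m π) := by
  classical
  set τ : Finset ℕ := (π ∪ (Finset.range (k+1)).filter Nat.Prime) ∪ s.natAbs.primeFactors with hτdef
  have hτ : ∀ p ∈ τ, Nat.Prime p := by
    intro p hp
    simp only [hτdef, Finset.mem_union, Finset.mem_filter] at hp
    rcases hp with (hp | hp) | hp
    · exact hπ p hp
    · exact hp.2
    · exact Nat.prime_of_mem_primeFactors hp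
  obtain ⟨x, hxG, hx⟩ := hwide τ hτ
  have hx' : ∃ i, ∃ p : ℕ, p.Prime ∧ p ∣ (x i).den ∧ p ∉ τ := by
    by_contra hcon
    push_neg at hcon
    exact hx (fun i p hp hpd => hcon i p hp hpd)
  obtain ⟨i0, p, hp, hpd0, hpτ⟩ := hx'
  have hpπ : p ∉ π := fun h => hpτ (by simp [hτdef, h])
  have hpk : (k:ℤ) < (p:ℤ) := by
    by_contra hle
    push_neg at hle
    have hpk' : p < k + 1 := by exact_mod_cast Int.lt_add_one_iff.mpr hle
    exact hpτ (by
      simp only [hτdef, Finset.mem_union, Finset.mem_filter, Finset.mem_range]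
      exact Or.inl (Or.inr ⟨hpk', hp⟩))
  have hps : ¬ (p:ℤ) ∣ s := by
    intro hdvd
    have : p ∈ s.natAbs.primeFactors := by
      rw [Nat.mem_primeFactors]
      have h2 : (p:ℤ).natAbs ∣ s.natAbs := Int.natAbs_dvd_natAbs.mpr hdvd
      exact ⟨hp, by simpa using h2, by simpa using hs⟩
    exact hpτ (by simp [hτdef, this])
  -- denominators
  set d : Fin m → ℕ := fun i => (x i).den with hd
  set D : ℕ := ∏ i, d i with hD
  have hD0 : D ≠ 0 := by
    rw [hD]
    exact Finset.prod_ne_zero_iff.mpr (fun i _ => (x i).den_nz)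
  set a : ℕ := D.factorization p with ha
  set N : ℕ := D / p ^ a with hN
  have hND : p ^ a * N = D := Nat.ordProj_mul_ordCompl_eq_self D p
  have hpN : ¬ p ∣ N := Nat.not_dvd_ordCompl hp hD0
  set e : Fin m → ℕ := fun i => D / d i with he
  have hed : ∀ i, e i * d i = D := fun i =>
    Nat.div_mul_cancel (Finset.dvd_prod_of_mem d (Finset.mem_univ i))
  set g : Fin m → ℚ := (s * (N:ℤ)) • x with hg
  -- key representation
  have hp0 : ((p:ℚ))^a ≠ 0 := pow_ne_zero _ (by exact_mod_cast hp.ne_zero)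
  have hrep : ∀ (c : ℤ) (i : Fin m),
      (c:ℚ) * g i = ((c * (s * (e i) * (x i).num) : ℤ) : ℚ) / ((p:ℚ))^a := by
    intro c i
    have hgi : g i = ((s * (N:ℤ) : ℤ) : ℚ) * x i := by
      simp [hg, zsmul_eq_mul]
    have hdx : ((d i : ℚ)) * x i = ((x i).num : ℚ) := by
      rw [hd]
      rw [mul_comm]
      exact_mod_cast Rat.mul_den_eq_num (x i)
    rw [hgi, eq_div_iff hp0]
    have h1 : ((N:ℚ)) * ((p:ℚ))^a = (D:ℚ) := by exact_mod_cast (by rw [mul_comm]; exact hND)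
    have h2 : ((e i : ℚ)) * ((d i : ℚ)) = (D:ℚ) := by exact_mod_cast hed i
    push_cast
    calc (c:ℚ) * ((s:ℚ) * (N:ℚ) * x i) * ((p:ℚ))^a
        = (c:ℚ) * (s:ℚ) * ((N:ℚ) * ((p:ℚ))^a) * x i := by ring
      _ = (c:ℚ) * (s:ℚ) * ((e i : ℚ) * ((d i:ℚ) * x i)) := by rw [h1, ← h2]; ring
      _ = (c:ℚ) * ((s:ℚ) * (e i:ℚ) * ((x i).num : ℚ)) := by rw [hdx]; ring
  have hdenpow : ∀ (c : ℤ) (i : Fin m), (((c:ℚ) * g i).den : ℤ) ∣ (p:ℤ)^a := by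
    intro c i
    rw [hrep c i]
    have := den_div_int_dvd (c * (s * (e i) * (x i).num)) ((p:ℤ)^a)
    simpa using this
  have hsN : ¬ (p:ℤ) ∣ (s * (N:ℤ)) := by
    intro hdvd
    rcases (Int.Prime.dvd_mul' hp hdvd) with h | h
    · exact hps h
    · exact hpN (Int.natCast_dvd_natCast.mp h)
  refine ⟨insert p τ, g, ?_, ?_, ?_, ?_, ?_, ?_⟩
  · exact fun q hq => Finset.mem_insert_of_mem (by simp [hτdef, hq])
  · intro q hq
    rcases Finset.mem_insert.mp hq with rfl | hq
    · exact hp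
    · exact hτ q hq
  · exact AddSubgroup.zsmul_mem G hxG _
  · -- g ∈ QpiVec m (insert p τ)
    intro i q hq hqd
    have hdvd : (g i).den ∣ p ^ a := by
      have h1 := hdenpow 1 i
      push_cast at h1
      rw [one_mul] at h1
      exact_mod_cast h1
    have hq2 : q ∣ p ^ a := hqd.trans hdvd
    have : q = p := (Nat.prime_dvd_prime_iff_eq hq hp).mp (hq.dvd_of_dvd_pow hq2)
    exact this ▸ Finset.mem_insert_self p τ
  · -- condition (b)
    rintro v ⟨hv1, hv2⟩ i
    obtain ⟨n, hn⟩ := AddSubgroup.mem_zmultiples_iff.mp hv1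
    have hvi : v i = (n:ℚ) * g i := by rw [← hn]; simp [zsmul_eq_mul]
    -- den (v i) = 1
    have hdvd : ((n:ℚ) * g i).den ∣ p ^ a := by
      have := hdenpow n i; exact_mod_cast this
    have hpden : ¬ p ∣ ((n:ℚ) * g i).den := by
      intro hpden
      have : p ∈ π := hv2 i p hp (hvi ▸ hpden)
      exact hpπ this
    have hden1 : ((n:ℚ) * g i).den = 1 := by
      obtain ⟨t, _, hteq⟩ := (Nat.dvd_prime_pow hp).mp hdvd
      rcases Nat.eq_zero_or_pos t with rfl | ht
      · simpa using hteq
      · exfalso; exact hpden (hteq ▸ dvd_pow_self p (Nat.pos_iff_ne_zero.mp ht))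
    -- w
    set w : ℚ := ((n * (e i) * (x i).num : ℤ) : ℚ) / ((p:ℚ))^a with hw
    have hsw : (s:ℚ) * w = (n:ℚ) * g i := by
      rw [hrep n i, hw]
      push_cast
      ring
    have hwdvd : (w.den : ℤ) ∣ (p:ℤ)^a := by
      rw [hw]
      simpa using den_div_int_dvd (n * (e i) * (x i).num) ((p:ℤ)^a)
    have hwp : ¬ p ∣ w.den := by
      intro hpw
      have := prime_dvd_den_int_mul hp hps hpw
      rw [hsw, hden1] at this
      exact hp.ne_one (Nat.dvd_one.mp this)
    have hwden1 : w.den = 1 := by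
      have hwdvd' : w.den ∣ p ^ a := by exact_mod_cast hwdvd
      obtain ⟨t, _, hteq⟩ := (Nat.dvd_prime_pow hp).mp hwdvd'
      rcases Nat.eq_zero_or_pos t with rfl | ht
      · simpa using hteq
      · exfalso; exact hwp (hteq ▸ dvd_pow_self p (Nat.pos_iff_ne_zero.mp ht))
    refine ⟨w.num, ?_⟩
    rw [hvi, ← hsw, ← den_one_cast w hwden1]
  · -- condition (c)
    intro n hn hnk hmem
    have hpn : ¬ (p:ℤ) ∣ n := by
      intro hdvd
      have := Int.le_of_dvd (abs_pos.mpr hn) ((dvd_abs _ _).mpr hdvd)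
      omega
    have hpnsN : ¬ (p:ℤ) ∣ (n * (s * (N:ℤ))) := by
      intro hdvd
      rcases (Int.Prime.dvd_mul' hp hdvd) with h | h
      · exact hpn h
      · exact hsN h
    have heq : (n • g) i0 = ((n * (s * (N:ℤ)) : ℤ) : ℚ) * x i0 := by
      simp [hg, zsmul_eq_mul]
      ring
    have hpden : p ∣ ((n • g) i0).den := by
      rw [heq]
      exact prime_dvd_den_int_mul hp hpnsN hpd0
    exact hpπ (hmem i0 p hp hpden)


/-- Lemma 6.3: if `G` is a wide subgroup of `ℚ^m`, `π₀` a finite set of primes,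
`k ∈ ℕ⁺` and `s ∈ ℤ \ {0}`, there are a chain `π₀ ⊆ π₁ ⊆ ⋯ ⊆ π_k` of finite sets
of primes and `g₁,…,g_k ∈ G` satisfying conditions (a_j), (b_j), (c_j). -/
theorem stmt_9 (m : ℕ) (hm : 0 < m) (G : AddSubgroup (Fin m → ℚ))
    (hZ : ∀ v : Fin m → ℚ, (∀ i, ∃ z : ℤ, v i = (z : ℚ)) → v ∈ G)
    (hwide : ∀ π : Finset ℕ, (∀ p ∈ π, Nat.Prime p) → ∃ x ∈ G, x ∉ QpiVec m π)
    (π₀ : Finset ℕ) (hπ₀ : ∀ p ∈ π₀, Nat.Prime p)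
    (k : ℕ) (hk : 0 < k) (s : ℤ) (hs : s ≠ 0) :
    ∃ (π : ℕ → Finset ℕ) (g : ℕ → Fin m → ℚ),
      π 0 = π₀ ∧
      (∀ j < k, π j ⊆ π (j + 1)) ∧
      (∀ j ≤ k, ∀ p ∈ π j, Nat.Prime p) ∧
      ∀ j, 1 ≤ j → j ≤ k →
        g j ∈ G ∧
        g j ∈ QpiVec m (π j) ∧
        ((AddSubgroup.zmultiples (g j) : Set (Fin m → ℚ)) ∩ QpiVec m (π (j - 1))
          ⊆ intVec m s) ∧
        ∀ n : ℤ, n ≠ 0 → |n| ≤ (k : ℤ) → n • g j ∉ QpiVec m (π (j - 1)) := by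
  classical
  have key := step_lemma m G hwide k s hs
  choose f gf hsub hpr hG hQ hb hc using key
  let chain : ℕ → {σ : Finset ℕ // ∀ p ∈ σ, Nat.Prime p} := fun j =>
    Nat.rec ⟨π₀, hπ₀⟩ (fun _ ih => ⟨f ih.1 ih.2, hpr ih.1 ih.2⟩) j
  have hchain : ∀ j : ℕ, (chain (j+1)).1 = f (chain j).1 (chain j).2 := fun j => rfl
  refine ⟨fun j => (chain j).1, fun j => gf (chain (j-1)).1 (chain (j-1)).2, rfl, ?_, ?_, ?_⟩
  · intro j _
    exact hsub (chain j).1 (chain j).2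
  · intro j _
    exact (chain j).2
  · intro j hj1 _
    obtain ⟨i, rfl⟩ : ∃ i, j = i + 1 := ⟨j - 1, (Nat.succ_pred_eq_of_pos hj1).symm⟩
    simp only [Nat.add_sub_cancel]
    exact ⟨hG _ _, hQ _ _, hb _ _, hc _ _⟩
end

section
/- For the poset (P, ≤) of conditions defined from a subgroup G of ℚ^m containing ℤ^m and an abelian group H, if p ∈ P, g ∈ G ∩ Q_{π^p}^m, h ∈ H and g + h ≠ 0, then there exists q ∈ P with q ≤ p, n^q = n^p + 1, and g + h ∉ U^q_{n^q}. -/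
open Pointwise

/-- The copy of `(sℤ)^m` inside `ℚ^m ⊕ H`. -/
def intVecH (m : ℕ) (H : Type*) [AddCommGroup H] (s : ℤ) : Set ((Fin m → ℚ) × H) :=
  {x | x.1 ∈ intVec m s ∧ x.2 = 0}

/-- The poset `ℙ` of conditions, built from a subgroup `G ≤ ℚ^m` and an abelian
group `H`; we work inside `ℚ^m ⊕ H`, represented as the product `(Fin m → ℚ) × H`. -/
structure Cond (m : ℕ) (G : AddSubgroup (Fin m → ℚ)) (H : Type*) [AddCommGroup H] where
  π : Finset ℕ
  primes : ∀ p ∈ π, Nat.Prime p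
  n : ℕ
  U : ℕ → Set ((Fin m → ℚ) × H)
  s : ℕ → ℕ
  s_pos : ∀ i ≤ n, 0 < s i
  zero_mem : ∀ i ≤ n, (0 : (Fin m → ℚ) × H) ∈ U i
  mem_sub : ∀ i ≤ n, U i ⊆ {x | x.1 ∈ G ∧ x.1 ∈ QpiVec m π}
  symm : ∀ i ≤ n, -U i = U i
  translate : ∀ i ≤ n, U i + intVecH m H (s i) = U i
  add_sub : ∀ i, i + 1 ≤ n → U (i + 1) + U (i + 1) ⊆ U i
  s_dvd : ∀ i, i + 1 ≤ n → s i ∣ s (i + 1)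

/-- The order on the poset `ℙ` of conditions: `q ≤ p` iff `π^p ⊆ π^q`, `n^p ≤ n^q`,
`U_i^q ∩ (Q_{π^p}^m + H) = U_i^p` and `s_i^q = s_i^p` for all `i ≤ n^p`. -/
def Cond.le {m : ℕ} {G : AddSubgroup (Fin m → ℚ)} {H : Type*} [AddCommGroup H]
    (q p : Cond m G H) : Prop :=
  p.π ⊆ q.π ∧ p.n ≤ q.n ∧
    (∀ i ≤ p.n, q.U i ∩ {x | x.1 ∈ QpiVec m p.π} = p.U i) ∧
    ∀ i ≤ p.n, q.s i = p.s i

/-- Lemma 7.5: given `p ∈ ℙ`, `g ∈ G ∩ Q_{π^p}^m` and `h ∈ H` with `g + h ≠ 0`,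
there is `q ≤ p` with `n^q = n^p + 1` and `g + h ∉ U^q_{n^q}`. -/
theorem stmt_16 (m : ℕ) (hm : 0 < m) (G : AddSubgroup (Fin m → ℚ))
    (hZ : ∀ v : Fin m → ℚ, (∀ i, ∃ z : ℤ, v i = (z : ℚ)) → v ∈ G)
    (H : Type*) [AddCommGroup H]
    (p : Cond m G H) (g : Fin m → ℚ) (hg : g ∈ G) (hgπ : g ∈ QpiVec m p.π)
    (h : H) (hne : ((g, h) : (Fin m → ℚ) × H) ≠ 0) :
    ∃ q : Cond m G H, q.le p ∧ q.n = p.n + 1 ∧ ((g, h) : (Fin m → ℚ) × H) ∉ q.U q.n := by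
  classical
  set N : ℕ := (∑ i, (g i).num.natAbs) + 1 with hN
  set s' : ℕ := p.s p.n * N with hs'
  have hspos : 0 < p.s p.n := p.s_pos p.n le_rfl
  have hNpos : 0 < N := Nat.succ_pos _
  have hs'pos : 0 < s' := Nat.mul_pos hspos hNpos
  have hNs' : N ≤ s' := Nat.le_mul_of_pos_left N hspos
  -- basic facts about intVecH
  have hsub : ∀ s : ℤ, ∀ x : (Fin m → ℚ) × H, x ∈ intVecH m H s →
      x.1 ∈ G ∧ x.1 ∈ QpiVec m p.π := by
    intro s x hx
    constructor
    · refine hZ _ (fun i => ?_)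
      obtain ⟨z, hz⟩ := hx.1 i
      exact ⟨s * z, by rw [hz]; push_cast; ring⟩
    · intro i
      obtain ⟨z, hz⟩ := hx.1 i
      intro pr hpr hdvd
      have : (x.1 i).den = 1 := by
        rw [hz]
        have : ((s : ℚ) * (z : ℚ)) = ((s * z : ℤ) : ℚ) := by push_cast; ring
        rw [this, Rat.den_intCast]
      rw [this] at hdvd
      exact absurd (Nat.dvd_one.mp hdvd) hpr.ne_one
  have hzero : ∀ s : ℤ, (0 : (Fin m → ℚ) × H) ∈ intVecH m H s := by
    intro s
    exact ⟨fun i => ⟨0, by simp⟩, rfl⟩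
  have hadd : ∀ s : ℤ, ∀ x y : (Fin m → ℚ) × H, x ∈ intVecH m H s → y ∈ intVecH m H s →
      x + y ∈ intVecH m H s := by
    rintro s x y ⟨hx1, hx2⟩ ⟨hy1, hy2⟩
    refine ⟨fun i => ?_, by simp [hx2, hy2]⟩
    obtain ⟨a, ha⟩ := hx1 i
    obtain ⟨b, hb⟩ := hy1 i
    exact ⟨a + b, by show x.1 i + y.1 i = _; rw [ha, hb]; push_cast; ring⟩
  have hneg : ∀ s : ℤ, ∀ x : (Fin m → ℚ) × H, x ∈ intVecH m H s → -x ∈ intVecH m H s := by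
    rintro s x ⟨hx1, hx2⟩
    refine ⟨fun i => ?_, by simp [hx2]⟩
    obtain ⟨a, ha⟩ := hx1 i
    exact ⟨-a, by show -(x.1 i) = _; rw [ha]; push_cast; ring⟩
  have hAA : ∀ s : ℤ, intVecH m H s + intVecH m H s = intVecH m H s := by
    intro s
    apply Set.Subset.antisymm
    · rintro x ⟨a, ha, b, hb, rfl⟩
      exact hadd s a b ha hb
    · intro x hx
      exact ⟨x, hx, 0, hzero s, by simp⟩
  have hmono : intVecH m H (s' : ℤ) ⊆ intVecH m H (p.s p.n : ℤ) := by
    rintro x ⟨hx1, hx2⟩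
    refine ⟨fun i => ?_, hx2⟩
    obtain ⟨z, hz⟩ := hx1 i
    exact ⟨(N : ℤ) * z, by rw [hz, hs']; push_cast; ring⟩
  have hsmall : intVecH m H (p.s p.n : ℤ) ⊆ p.U p.n := by
    intro x hx
    rw [← p.translate p.n le_rfl]
    exact ⟨0, p.zero_mem p.n le_rfl, x, hx, by simp⟩
  refine ⟨⟨p.π, p.primes, p.n + 1,
      (fun i => if i ≤ p.n then p.U i else intVecH m H (s' : ℤ)),
      (fun i => if i ≤ p.n then p.s i else s'),
      ?_, ?_, ?_, ?_, ?_, ?_, ?_⟩, ⟨subset_rfl, Nat.le_succ _, ?_, ?_⟩, rfl, ?_⟩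
  · intro i _
    by_cases hi : i ≤ p.n
    · simpa [hi] using p.s_pos i hi
    · simpa [hi] using hs'pos
  · intro i _
    by_cases hi : i ≤ p.n
    · simpa [hi] using p.zero_mem i hi
    · simpa [hi] using hzero (s' : ℤ)
  · intro i _
    by_cases hi : i ≤ p.n
    · simpa [hi] using p.mem_sub i hi
    · simp only [hi, if_neg, ite_false]
      intro x hx
      exact hsub (s' : ℤ) x hx
  · intro i _
    by_cases hi : i ≤ p.n
    · simpa [hi] using p.symm i hi
    · simp only [hi, ite_false]
      ext x
      rw [Set.mem_neg]
      constructor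
      · intro hx
        have := hneg (s' : ℤ) _ hx
        simpa using this
      · exact hneg (s' : ℤ) x
  · intro i _
    by_cases hi : i ≤ p.n
    · simpa [hi] using p.translate i hi
    · simpa [hi] using hAA (s' : ℤ)
  · intro i hi
    by_cases hi' : i + 1 ≤ p.n
    · have : i ≤ p.n := by omega
      simpa [hi', this] using p.add_sub i hi'
    · have hip : i = p.n := by omega
      subst hip
      have h1 : ¬ (p.n + 1 ≤ p.n) := by omega
      simp only [h1, ite_false, le_rfl, ite_true]
      calc intVecH m H (s' : ℤ) + intVecH m H (s' : ℤ) = intVecH m H (s' : ℤ) := hAA _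
        _ ⊆ intVecH m H (p.s p.n : ℤ) := hmono
        _ ⊆ p.U p.n := hsmall
  · intro i hi
    by_cases hi' : i + 1 ≤ p.n
    · have : i ≤ p.n := by omega
      simpa [hi', this] using p.s_dvd i hi'
    · have hip : i = p.n := by omega
      subst hip
      simp only [hi', ite_false, le_rfl, ite_true]
      exact ⟨N, rfl⟩
  · intro i hi
    simp only [hi, ite_true]
    apply Set.Subset.antisymm
    · exact Set.inter_subset_left
    · intro x hx
      exact ⟨hx, (p.mem_sub i hi hx).2⟩
  · intro i hi
    simp [hi]
  · have hnn : ¬ (p.n + 1 ≤ p.n) := by omega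
    simp only [hnn, ite_false]
    rintro ⟨hx1, hx2⟩
    simp only at hx2
    subst hx2
    have hg0 : g ≠ 0 := fun hg0 => hne (by simp [hg0])
    obtain ⟨i, hi⟩ : ∃ i, g i ≠ 0 := by
      by_contra hcon
      push_neg at hcon
      exact hg0 (funext hcon)
    obtain ⟨z, hz⟩ := hx1 i
    have hz' : g i = (s' : ℚ) * z := hz
    have hz0 : z ≠ 0 := by
      rintro rfl
      simp at hz'
      exact hi hz'
    have hgint : g i = ((s' * z : ℤ) : ℚ) := by rw [hz']; push_cast; ring
    have hnum : (g i).num = (s' : ℤ) * z := by rw [hgint, Rat.num_intCast]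
    have hnatabs : (g i).num.natAbs = s' * z.natAbs := by
      rw [hnum, Int.natAbs_mul, Int.natAbs_natCast]
    have hle : (g i).num.natAbs ≤ ∑ j, (g j).num.natAbs :=
      Finset.single_le_sum (f := fun j => (g j).num.natAbs) (fun _ _ => Nat.zero_le _)
        (Finset.mem_univ i)
    have hz1 : 1 ≤ z.natAbs := Nat.one_le_iff_ne_zero.2 (Int.natAbs_ne_zero.mpr hz0)
    have : s' ≤ (g i).num.natAbs := by
      rw [hnatabs]
      exact Nat.le_mul_of_pos_right s' hz1
    omega
end

section
/- In the poset (P, ≤) of conditions (defined from a subgroup G ≤ ℚ^m containing ℤ^m and an abelian group H), for every n ∈ ℕ the set A_n = {q ∈ P : n ≤ n^q} is dense and downward-closed, and for every finite set π of primes the set B_π = {q ∈ P : π ⊆ π^q} is dense. -/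
open Pointwise

lemma zero_mem_intVecH (m : ℕ) (H : Type*) [AddCommGroup H] (s : ℤ) :
    (0 : (Fin m → ℚ) × H) ∈ intVecH m H s :=
  ⟨fun i => ⟨0, by simp⟩, rfl⟩

lemma add_mem_intVecH (m : ℕ) (H : Type*) [AddCommGroup H] (s : ℤ)
    {x y : (Fin m → ℚ) × H} (hx : x ∈ intVecH m H s) (hy : y ∈ intVecH m H s) :
    x + y ∈ intVecH m H s := by
  refine ⟨fun i => ?_, by simp [hx.2, hy.2]⟩
  obtain ⟨a, ha⟩ := hx.1 i
  obtain ⟨b, hb⟩ := hy.1 i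
  exact ⟨a + b, by simp [Prod.fst_add, ha, hb]; ring⟩

lemma neg_intVecH (m : ℕ) (H : Type*) [AddCommGroup H] (s : ℤ) :
    -(intVecH m H s) = intVecH m H s := by
  ext x
  simp only [Set.mem_neg]
  constructor
  · rintro ⟨h1, h2⟩
    refine ⟨fun i => ?_, by simpa using congrArg Neg.neg h2⟩
    obtain ⟨z, hz⟩ := h1 i
    exact ⟨-z, by simp only [Prod.fst_neg, Pi.neg_apply] at hz; push_cast; linarith⟩
  · rintro ⟨h1, h2⟩
    refine ⟨fun i => ?_, by simp [h2]⟩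
    obtain ⟨z, hz⟩ := h1 i
    exact ⟨-z, by simp [hz]⟩

lemma intVecH_add_self (m : ℕ) (H : Type*) [AddCommGroup H] (s : ℤ) :
    intVecH m H s + intVecH m H s = intVecH m H s := by
  apply subset_antisymm
  · rintro x ⟨a, ha, b, hb, rfl⟩
    exact add_mem_intVecH m H s ha hb
  · intro x hx
    exact ⟨x, hx, 0, zero_mem_intVecH m H s, by simp⟩

lemma intVecH_subset (m : ℕ) (H : Type*) [AddCommGroup H] (s : ℤ)
    {A : Set ((Fin m → ℚ) × H)} (h0 : (0 : (Fin m → ℚ) × H) ∈ A)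
    (ht : A + intVecH m H s = A) : intVecH m H s ⊆ A := by
  intro x hx
  rw [← ht]
  exact ⟨0, h0, x, hx, by simp⟩

lemma intVecH_mem_sub (m : ℕ) (G : AddSubgroup (Fin m → ℚ))
    (hZ : ∀ v : Fin m → ℚ, (∀ i, ∃ z : ℤ, v i = (z : ℚ)) → v ∈ G)
    (H : Type*) [AddCommGroup H] (s : ℤ) (π : Finset ℕ)
    {x : (Fin m → ℚ) × H} (hx : x ∈ intVecH m H s) :
    x.1 ∈ G ∧ x.1 ∈ QpiVec m π := by
  have hint : ∀ i, ∃ z : ℤ, x.1 i = (z : ℚ) := by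
    intro i
    obtain ⟨z, hz⟩ := hx.1 i
    exact ⟨s * z, by push_cast; exact hz⟩
  refine ⟨hZ _ hint, fun i p hp hd => ?_⟩
  obtain ⟨z, hz⟩ := hint i
  rw [hz, Rat.den_intCast, Nat.dvd_one] at hd
  exact absurd hd hp.ne_one

lemma QpiVec_mono (m : ℕ) {π₁ π₂ : Finset ℕ} (h : π₁ ⊆ π₂) :
    QpiVec m π₁ ⊆ QpiVec m π₂ := fun v hv i p hp hd => h (hv i p hp hd)

/-- Lemmas 8.3 and 8.4: the sets `A_n = {q ∈ ℙ : n ≤ n^q}` are dense and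
downward-closed, and the sets `B_π = {q ∈ ℙ : π ⊆ π^q}` are dense. -/
theorem stmt_17 (m : ℕ) (hm : 0 < m) (G : AddSubgroup (Fin m → ℚ))
    (hZ : ∀ v : Fin m → ℚ, (∀ i, ∃ z : ℤ, v i = (z : ℚ)) → v ∈ G)
    (H : Type*) [AddCommGroup H] :
    (∀ n : ℕ,
      (∀ p : Cond m G H, ∃ q : Cond m G H, q.le p ∧ n ≤ q.n) ∧
      (∀ p q : Cond m G H, n ≤ p.n → q.le p → n ≤ q.n)) ∧
    ∀ π : Finset ℕ, (∀ pr ∈ π, Nat.Prime pr) →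
      ∀ p : Cond m G H, ∃ q : Cond m G H, q.le p ∧ π ⊆ q.π := by
  constructor
  · intro n
    constructor
    · intro p
      refine ⟨⟨p.π, p.primes, max p.n n,
        fun i => if i ≤ p.n then p.U i else intVecH m H (p.s p.n),
        fun i => if i ≤ p.n then p.s i else p.s p.n,
        ?_, ?_, ?_, ?_, ?_, ?_, ?_⟩, ?_, ?_⟩
      · intro i _
        by_cases h : i ≤ p.n <;> simp only [h, if_true, if_false]
        · exact p.s_pos i h
        · exact p.s_pos p.n le_rfl
      · intro i _
        by_cases h : i ≤ p.n <;> simp only [h, if_true, if_false]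
        · exact p.zero_mem i h
        · exact zero_mem_intVecH m H _
      · intro i _
        by_cases h : i ≤ p.n <;> simp only [h, if_true, if_false]
        · exact p.mem_sub i h
        · exact fun x hx => intVecH_mem_sub m G hZ H _ _ hx
      · intro i _
        by_cases h : i ≤ p.n <;> simp only [h, if_true, if_false]
        · exact p.symm i h
        · exact neg_intVecH m H _
      · intro i _
        by_cases h : i ≤ p.n <;> simp only [h, if_true, if_false]
        · exact p.translate i h
        · exact intVecH_add_self m H _
      · intro i hi
        by_cases h1 : i + 1 ≤ p.n
        · have h0 : i ≤ p.n := by omega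
          simp only [h1, h0, if_true]
          exact p.add_sub i h1
        · by_cases h0 : i ≤ p.n
          · have hie : i = p.n := by omega
            simp only [h1, h0, if_true, if_false]
            rw [intVecH_add_self m H _]
            rw [hie]
            exact intVecH_subset m H _ (p.zero_mem p.n le_rfl) (p.translate p.n le_rfl)
          · simp only [h1, h0, if_false]
            rw [intVecH_add_self m H _]
      · intro i hi
        by_cases h1 : i + 1 ≤ p.n
        · have h0 : i ≤ p.n := by omega
          simp only [h1, h0, if_true]
          exact p.s_dvd i h1
        · by_cases h0 : i ≤ p.n
          · have hie : i = p.n := by omega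
            subst hie
            simp
          · simp only [h1, h0, if_false, dvd_refl]
      · refine ⟨subset_rfl, le_max_left _ _, fun i hi => ?_, fun i hi => by simp [hi]⟩
        simp only [hi, if_true]
        exact Set.inter_eq_left.mpr fun x hx => (p.mem_sub i hi hx).2
      · exact le_max_right _ _
    · intro p q hn hle
      exact hn.trans hle.2.1
  · intro π hπ p
    refine ⟨⟨p.π ∪ π,
      fun pr hpr => (Finset.mem_union.mp hpr).elim (p.primes pr) (hπ pr),
      p.n, p.U, p.s, p.s_pos, p.zero_mem,
      fun i hi x hx => ⟨(p.mem_sub i hi hx).1,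
        QpiVec_mono m Finset.subset_union_left (p.mem_sub i hi hx).2⟩,
      p.symm, p.translate, p.add_sub,
      p.s_dvd⟩, ?_, Finset.subset_union_right⟩
    exact ⟨Finset.subset_union_left, le_rfl, fun i hi =>
      Set.inter_eq_left.mpr fun x hx => (p.mem_sub i hi hx).2, fun i hi => rfl⟩
end
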